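/- Let q ≥ 2 be an integer and let Ḡ_q = Ẑ' ⋊ Ẑ be the profinite group topologically generated by elements s, t with t generating Ẑ' (the prime-to-p completion of Ẑ), s generating Ẑ, and relation s t s^{-1} = t^q. Let ℓ be a prime not dividing q and F a finite field of characteristic ℓ with trivial Ḡ_q-action. A normalized continuous 2-cocycle [·,·] : Ḡ_q × Ḡ_q → F (restricted to the subgroup generated by t and s^{ℓ-1}) is a coboundary if and only if d([·,·]) := Σ_{i=1}^{q^{ℓ-1}−1} [t^i, t] + [t^{q^{ℓ-1}}, s^{ℓ-1}] − [s^{ℓ-1}, t] equals 0 in F. -/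

import Mathlib

/-- The tame relation subgroup `⟨s^(ℓ-1), t⟩` modelled as the presented group
`⟨σ, τ ∣ σ τ σ⁻¹ = τ^m⟩` with `m = q^(ℓ-1)` (generator `0` is `σ = s^(ℓ-1)`,
generator `1` is `τ = t`). -/
def TameGroup (m : ℕ) : Type :=
  PresentedGroup ({FreeGroup.of 0 * FreeGroup.of 1 * (FreeGroup.of 0)⁻¹ *
    ((FreeGroup.of 1) ^ m)⁻¹} : Set (FreeGroup (Fin 2)))

instance (m : ℕ) : Group (TameGroup m) := by unfold TameGroup; infer_instance

/-- The generator `σ` (corresponding to `s^(ℓ-1)`). -/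
def TameGroup.sigma (m : ℕ) : TameGroup m := PresentedGroup.of 0
/-- The generator `τ` (corresponding to `t`). -/
def TameGroup.tau (m : ℕ) : TameGroup m := PresentedGroup.of 1


structure CExt (F G : Type*) where
  a : F
  x : G


theorem TameGroup.rel (m : ℕ) :
    TameGroup.sigma m * TameGroup.tau m = TameGroup.tau m ^ m * TameGroup.sigma m := by
  have h : ((PresentedGroup.mk _ (FreeGroup.of 0 * FreeGroup.of 1 * (FreeGroup.of 0)⁻¹ *
      ((FreeGroup.of 1) ^ m)⁻¹)) : TameGroup m) = 1 := by
    apply (QuotientGroup.eq_one_iff _).mpr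
    exact Subgroup.subset_normalClosure rfl
  have h2 : sigma m * tau m * (sigma m)⁻¹ * ((tau m) ^ m)⁻¹ = 1 := by
    simp only [map_mul, map_inv, map_pow] at h
    exact h
  have := mul_inv_eq_one.mp h2
  rw [← this]; group

theorem tame_split (m : ℕ) (hm : 1 ≤ m) (F : Type*) [AddCommGroup F]
    (c : TameGroup m → TameGroup m → F)
    (hnorm : ∀ g : TameGroup m, c 1 g = 0 ∧ c g 1 = 0)
    (hcocycle : ∀ f g h : TameGroup m,
      c g h - c (f * g) h + c f (g * h) - c f g = 0)
    (hd : (∑ i ∈ Finset.Icc 1 (m - 1), c (TameGroup.tau m ^ i) (TameGroup.tau m))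
        + c (TameGroup.tau m ^ m) (TameGroup.sigma m)
        - c (TameGroup.sigma m) (TameGroup.tau m) = 0) :
    ∃ f : TameGroup m → F, f 1 = 0 ∧
      ∀ g h : TameGroup m, c g h = f g + f h - f (g * h) := by
  letI : Mul (CExt F (TameGroup m)) := ⟨fun p q => ⟨p.a + q.a + c p.x q.x, p.x * q.x⟩⟩
  letI : One (CExt F (TameGroup m)) := ⟨⟨0, 1⟩⟩
  letI : Inv (CExt F (TameGroup m)) := ⟨fun p => ⟨-p.a - c p.x p.x⁻¹, p.x⁻¹⟩⟩
  have hmul : ∀ p q : CExt F (TameGroup m),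
      p * q = ⟨p.a + q.a + c p.x q.x, p.x * q.x⟩ := fun _ _ => rfl
  have hone : (1 : CExt F (TameGroup m)) = ⟨0, 1⟩ := rfl
  letI : Group (CExt F (TameGroup m)) := Group.ofLeftAxioms
    (fun p q r => by
      rw [hmul, hmul, hmul, hmul]
      have h := hcocycle p.x q.x r.x
      congr 1
      · dsimp only
        symm
        apply eq_of_sub_eq_zero
        rw [← h]; abel
      · exact mul_assoc _ _ _)
    (fun p => by
      cases p with
      | mk pa px =>
        rw [hone, hmul]
        simp [(hnorm px).1])
    (fun p => by
      show (⟨-p.a - c p.x p.x⁻¹, p.x⁻¹⟩ : CExt F (TameGroup m)) * p = ⟨0, 1⟩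
      rw [hmul]
      dsimp only
      have h1 := hcocycle p.x p.x⁻¹ p.x
      rw [mul_inv_cancel, inv_mul_cancel, (hnorm p.x).1, (hnorm p.x).2] at h1
      congr 1
      · rw [← h1]; abel
      · exact inv_mul_cancel _)
  set E0 : CExt F (TameGroup m) := ⟨0, TameGroup.sigma m⟩ with hE0
  set E1 : CExt F (TameGroup m) := ⟨0, TameGroup.tau m⟩ with hE1
  have hpow : ∀ n : ℕ, E1 ^ (n + 1) =
      ⟨∑ i ∈ Finset.Icc 1 n, c (TameGroup.tau m ^ i) (TameGroup.tau m),
        TameGroup.tau m ^ (n + 1)⟩ := by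
    intro n
    induction n with
    | zero => simp [hE1, pow_one]
    | succ n ih =>
      rw [pow_succ, ih, hmul]
      dsimp only
      rw [Finset.sum_Icc_succ_top (show 1 ≤ n + 1 by omega), add_zero, ← pow_succ]
  have hrels : ∀ r ∈ ({FreeGroup.of 0 * FreeGroup.of 1 * (FreeGroup.of 0)⁻¹ *
      ((FreeGroup.of 1) ^ m)⁻¹} : Set (FreeGroup (Fin 2))),
      FreeGroup.lift (![E0, E1] : Fin 2 → CExt F (TameGroup m)) r = 1 := by
    rintro r rfl
    simp only [map_mul, map_inv, map_pow, FreeGroup.lift_apply_of]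
    have hA : (![E0, E1] : Fin 2 → CExt F (TameGroup m)) 0 = E0 := rfl
    have hB : (![E0, E1] : Fin 2 → CExt F (TameGroup m)) 1 = E1 := rfl
    rw [hA, hB, mul_inv_eq_one, mul_inv_eq_iff_eq_mul]
    obtain ⟨k, rfl⟩ : ∃ k, m = k + 1 := ⟨m - 1, by omega⟩
    have hd' : (∑ i ∈ Finset.Icc 1 k, c (TameGroup.tau (k+1) ^ i) (TameGroup.tau (k+1)))
        + c (TameGroup.tau (k+1) ^ (k+1)) (TameGroup.sigma (k+1))
        = c (TameGroup.sigma (k+1)) (TameGroup.tau (k+1)) := by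
      have h := hd
      simp only [Nat.add_sub_cancel] at h
      exact sub_eq_zero.mp h
    rw [hpow k, hmul, hmul]
    dsimp only
    congr 1
    · rw [zero_add, zero_add, add_zero, ← hd']
    · exact TameGroup.rel (k + 1)
  set φ : TameGroup m →* CExt F (TameGroup m) := PresentedGroup.toGroup hrels with hφ
  let π : CExt F (TameGroup m) →* TameGroup m :=
    { toFun := fun p => p.x, map_one' := rfl, map_mul' := fun _ _ => rfl }
  have hπφ : ∀ g : TameGroup m, (φ g).x = g := by
    intro g
    have : π.comp φ = MonoidHom.id (TameGroup m) := by
      apply PresentedGroup.ext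
      intro i
      fin_cases i
      · show (φ (TameGroup.sigma m)).x = TameGroup.sigma m
        rw [show φ (TameGroup.sigma m) = E0 from PresentedGroup.toGroup.of hrels]
      · show (φ (TameGroup.tau m)).x = TameGroup.tau m
        rw [show φ (TameGroup.tau m) = E1 from PresentedGroup.toGroup.of hrels]
    exact congrArg (fun ψ => ψ g) this
  refine ⟨fun g => -(φ g).a, ?_, ?_⟩
  · show -(φ (1 : TameGroup m)).a = 0
    rw [map_one, hone]
    exact neg_zero
  · intro g h
    show c g h = -(φ g).a + -(φ h).a - -(φ (g * h)).a
    have hgh := congrArg CExt.a (map_mul φ g h)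
    rw [hmul] at hgh
    simp only [hπφ] at hgh
    rw [hgh]
    abel



/-- Let `q ≥ 2`, `ℓ` a prime not dividing `q`, `F` a finite field of
characteristic `ℓ` with trivial action.  A normalized 2-cocycle `c` on the group
generated by `t` and `s^(ℓ-1)` (with relation `σ τ σ⁻¹ = τ^(q^(ℓ-1))`) is a
coboundary if and only if
`d(c) = Σ_{i=1}^{q^(ℓ-1)−1} c(τ^i, τ) + c(τ^(q^(ℓ-1)), σ) − c(σ, τ) = 0`. -/
theorem normalized_two_cocycle_coboundary_iff
    (ℓ q : ℕ) (hℓ : ℓ.Prime) (hq2 : 2 ≤ q) (hq : ¬ ℓ ∣ q)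
    (F : Type*) [Field F] [Fintype F] (hchar : CharP F ℓ)
    (c : TameGroup (q ^ (ℓ - 1)) → TameGroup (q ^ (ℓ - 1)) → F)
    (hnorm : ∀ g : TameGroup (q ^ (ℓ - 1)), c 1 g = 0 ∧ c g 1 = 0)
    (hcocycle : ∀ f g h : TameGroup (q ^ (ℓ - 1)),
      c g h - c (f * g) h + c f (g * h) - c f g = 0) :
    (∃ f : TameGroup (q ^ (ℓ - 1)) → F, f 1 = 0 ∧
        ∀ g h : TameGroup (q ^ (ℓ - 1)), c g h = f g + f h - f (g * h))
    ↔ (∑ i ∈ Finset.Icc 1 (q ^ (ℓ - 1) - 1),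
          c (TameGroup.tau (q ^ (ℓ - 1)) ^ i) (TameGroup.tau (q ^ (ℓ - 1))))
        + c (TameGroup.tau (q ^ (ℓ - 1)) ^ (q ^ (ℓ - 1))) (TameGroup.sigma (q ^ (ℓ - 1)))
        - c (TameGroup.sigma (q ^ (ℓ - 1))) (TameGroup.tau (q ^ (ℓ - 1))) = 0 := by
  have hm : 1 ≤ q ^ (ℓ - 1) := Nat.one_le_pow _ _ (by omega)
  haveI := Fact.mk hℓ
  have hq0 : (q : ZMod ℓ) ≠ 0 := by
    intro h0
    exact hq ((ZMod.natCast_eq_zero_iff q ℓ).mp h0)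
  have hmF : ((q ^ (ℓ - 1) : ℕ) : F) = 1 := by
    have h1 : ((q ^ (ℓ - 1) : ℕ) : ZMod ℓ) = 1 := by
      push_cast
      exact ZMod.pow_card_sub_one_eq_one hq0
    have h2 := congrArg (ZMod.castHom (dvd_refl ℓ) F) h1
    simpa using h2
  have hcast : ((q ^ (ℓ - 1) - 1 : ℕ) : F) = 0 := by
    rw [Nat.cast_sub hm, Nat.cast_one, hmF, sub_self]
  constructor
  · rintro ⟨f, hf1, hf⟩
    have hsum : ∀ n : ℕ, ∑ i ∈ Finset.Icc 1 n,
          c (TameGroup.tau (q ^ (ℓ - 1)) ^ i) (TameGroup.tau (q ^ (ℓ - 1)))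
        = (n : ℕ) • f (TameGroup.tau (q ^ (ℓ - 1))) + f (TameGroup.tau (q ^ (ℓ - 1)))
          - f (TameGroup.tau (q ^ (ℓ - 1)) ^ (n + 1)) := by
      intro n
      induction n with
      | zero => simp [pow_one]
      | succ n ih =>
        rw [Finset.sum_Icc_succ_top (show 1 ≤ n + 1 by omega), ih,
          hf (TameGroup.tau (q ^ (ℓ - 1)) ^ (n + 1)) (TameGroup.tau (q ^ (ℓ - 1))),
          ← pow_succ, succ_nsmul]
        abel
    rw [hsum (q ^ (ℓ - 1) - 1),
      hf (TameGroup.tau (q ^ (ℓ - 1)) ^ (q ^ (ℓ - 1))) (TameGroup.sigma (q ^ (ℓ - 1))),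
      hf (TameGroup.sigma (q ^ (ℓ - 1))) (TameGroup.tau (q ^ (ℓ - 1))),
      show q ^ (ℓ - 1) - 1 + 1 = q ^ (ℓ - 1) from by omega,
      TameGroup.rel (q ^ (ℓ - 1)), nsmul_eq_mul, hcast, zero_mul]
    abel
  · intro hd
    exact tame_split (q ^ (ℓ - 1)) hm F c hnorm hcocycle hd
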